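/- The set {z·ỹ : ỹ ∈ Bias_{l,Δ}(y)} attains its maximum, and this maximum equals z·y + S, where S is the sum of the l largest values among the per-coordinate positive potential impacts ρ_i^+ = z_i δ_i^u if z_i ≥ 0 and ρ_i^+ = z_i δ_i^l if z_i < 0 (equivalently ρ_i^+ = max(z_i δ_i^l, z_i δ_i^u) = max over d ∈ [δ_i^l, δ_i^u] of z_i d). -/

import Mathlib

open Matrix Set Finset

/-- The bias set: label vectors differing from `y` in at most `l` coordinates,
with per-coordinate difference in `[δl i, δu i]`. -/
def Bias {n : ℕ} (y δl δu : Fin n → ℝ) (l : ℕ) : Set (Fin n → ℝ) :=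
  {y' | (∀ i, y' i - y i ∈ Set.Icc (δl i) (δu i)) ∧
        (Finset.univ.filter (fun i => y' i ≠ y i)).card ≤ l}

/-- Dot product of two vectors in `ℝ^n`. -/
def dotR {n : ℕ} (z v : Fin n → ℝ) : ℝ := ∑ i, z i * v i

/-- Sum of the `l` largest entries of `ρ`. -/
noncomputable def topSum {n : ℕ} (ρ : Fin n → ℝ) (l : ℕ) : ℝ :=
  (((List.ofFn ρ).mergeSort (· ≥ ·)).take l).sum

private lemma le_of_strictMono_fin {m n : ℕ} {v : Fin m → Fin n} (hv : StrictMono v)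
    (k : Fin m) : (k : ℕ) ≤ (v k : ℕ) := by
  have key : ∀ N : ℕ, ∀ k : Fin m, (k : ℕ) = N → N ≤ (v k : ℕ) := by
    intro N
    induction N with
    | zero => intro k _; exact Nat.zero_le _
    | succ j ih =>
      intro k hk
      have hj : j < m := by omega
      have h1 : j ≤ (v ⟨j, hj⟩ : ℕ) := ih ⟨j, hj⟩ rfl
      have h2 : v ⟨j, hj⟩ < v k := hv (by simp [Fin.lt_def, hk])
      have h3 : (v ⟨j, hj⟩ : ℕ) < (v k : ℕ) := h2
      omega
  exact key _ k rfl

/-- For an antitone nonneg `g`, any sum over at most `l` coordinates is at most the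
sum over the first `l` coordinates. -/
private lemma sum_le_sum_first {n : ℕ} (g : Fin n → ℝ) (hg : Antitone g)
    (hg0 : ∀ i, 0 ≤ g i) {l : ℕ} (hln : l ≤ n) (s : Finset (Fin n)) (hs : s.card ≤ l) :
    ∑ i ∈ s, g i ≤ ∑ i ∈ Finset.univ.filter (fun i : Fin n => (i : ℕ) < l), g i := by
  classical
  set f : ℕ → ℝ := fun k => if h : k < n then g ⟨k, h⟩ else 0 with hf
  have hf0 : ∀ k, 0 ≤ f k := by
    intro k; by_cases h : k < n <;> simp [hf, h, hg0]
  set m := s.card with hm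
  have hmn : m ≤ n := le_trans hs hln
  set e := s.orderIsoOfFin (rfl : s.card = m) with he
  have step1 : ∑ i ∈ s, g i = ∑ k : Fin m, g (e k) := by
    rw [← Finset.sum_coe_sort s g]
    exact (Equiv.sum_comp e.toEquiv (fun x : s => g x)).symm
  have hstrict : StrictMono (fun k : Fin m => (e k : Fin n)) :=
    fun a b hab => e.strictMono hab
  have step2 : ∀ k : Fin m, g (e k) ≤ f (k : ℕ) := by
    intro k
    have hk : (k : ℕ) < n := lt_of_lt_of_le k.2 hmn
    have hle : (⟨(k : ℕ), hk⟩ : Fin n) ≤ (e k : Fin n) := by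
      have := le_of_strictMono_fin hstrict k
      exact Fin.mk_le_of_le_val this
    calc g (e k) ≤ g ⟨(k : ℕ), hk⟩ := hg hle
      _ = f (k : ℕ) := by simp [hf, hk]
  have step3 : ∑ i ∈ s, g i ≤ ∑ k ∈ Finset.range m, f k := by
    rw [step1, ← Fin.sum_univ_eq_sum_range f m]
    exact Finset.sum_le_sum (fun k _ => step2 k)
  have step4 : ∑ k ∈ Finset.range m, f k ≤ ∑ k ∈ Finset.range l, f k :=
    Finset.sum_le_sum_of_subset_of_nonneg (Finset.range_subset_range.2 hs)
      (fun k _ _ => hf0 k)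
  have hset : Finset.univ.filter (fun i : Fin n => (i : ℕ) < l)
      = Finset.univ.map (Fin.castLEEmb hln) := by
    ext i
    simp only [Finset.mem_filter, Finset.mem_univ, true_and, Finset.mem_map,
      Fin.castLEEmb, Function.Embedding.coeFn_mk]
    constructor
    · intro hi
      exact ⟨⟨(i : ℕ), hi⟩, by ext; simp⟩
    · rintro ⟨k, -, rfl⟩
      exact k.2
  have step5 : ∑ k ∈ Finset.range l, f k
      = ∑ i ∈ Finset.univ.filter (fun i : Fin n => (i : ℕ) < l), g i := by
    rw [hset, Finset.sum_map, ← Fin.sum_univ_eq_sum_range f l]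
    refine Finset.sum_congr rfl (fun k _ => ?_)
    have hk : (k : ℕ) < n := lt_of_lt_of_le k.2 hln
    simp [hf, hk, Fin.castLEEmb, Fin.castLE]
  calc ∑ i ∈ s, g i ≤ ∑ k ∈ Finset.range m, f k := step3
    _ ≤ ∑ k ∈ Finset.range l, f k := step4
    _ = _ := step5

/-- The maximum of `z·ỹ` over the bias set is attained and equals
`z·y` plus the sum of the `l` largest positive potential impacts
`ρ⁺ i = max (z i * δl i) (z i * δu i)`. -/
theorem stmt2 {n : ℕ} (z y δl δu : Fin n → ℝ)
    (hl : ∀ i, δl i ≤ 0) (hu : ∀ i, 0 ≤ δu i) (l : ℕ) (hln : l ≤ n) :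
    IsGreatest ((fun y' => dotR z y') '' Bias y δl δu l)
      (dotR z y + topSum (fun i => max (z i * δl i) (z i * δu i)) l) := by
  classical
  set ρ : Fin n → ℝ := fun i => max (z i * δl i) (z i * δu i) with hρ
  have hρ0 : ∀ i, 0 ≤ ρ i := by
    intro i
    rcases le_or_gt 0 (z i) with hz | hz
    · exact le_trans (mul_nonneg hz (hu i)) (le_max_right _ _)
    · have h0 : z i * 0 ≤ z i * δl i := mul_le_mul_of_nonpos_left (hl i) hz.le
      have h0' : (0:ℝ) ≤ z i * δl i := by simpa using h0
      exact le_trans h0' (le_max_left _ _)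
  -- the "best direction" vector
  set d : Fin n → ℝ := fun i => if 0 ≤ z i then δu i else δl i with hd
  have hzd : ∀ i, z i * d i = ρ i := by
    intro i
    rcases le_or_gt 0 (z i) with hz | hz
    · have h1 : z i * δl i ≤ z i * δu i :=
        mul_le_mul_of_nonneg_left (le_trans (hl i) (hu i)) hz
      simp [hd, hρ, hz, max_eq_right h1]
    · have h1 : z i * δu i ≤ z i * δl i :=
        mul_le_mul_of_nonpos_left (le_trans (hl i) (hu i)) hz.le
      simp [hd, hρ, not_le.2 hz, max_eq_left h1]
  have hdIcc : ∀ i, δl i ≤ d i ∧ d i ≤ δu i := by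
    intro i
    by_cases hz : 0 ≤ z i <;> simp [hd, hz, le_trans (hl i) (hu i), le_refl]
  -- sorting permutation
  set τ : Equiv.Perm (Fin n) := (Fin.revPerm).trans (Tuple.sort ρ) with hτ
  set g : Fin n → ℝ := ρ ∘ τ with hg
  have hganti : Antitone g := by
    intro a b hab
    have : Fin.rev b ≤ Fin.rev a := Fin.rev_le_rev.2 hab
    exact Tuple.monotone_sort ρ this
  have hg0 : ∀ i, 0 ≤ g i := fun i => hρ0 _
  -- the sorted list
  have hL : (List.ofFn ρ).mergeSort (· ≥ ·) = List.ofFn g := by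
    haveI : IsAntisymm ℝ (· ≥ ·) := ⟨fun a b h1 h2 => le_antisymm h2 h1⟩
    refine (fun hp h1 h2 => List.Perm.eq_of_pairwise' (r := fun a b : ℝ => a ≥ b) h1 h2 hp) ?_ ?_ ?_
    · exact (List.mergeSort_perm _ _).trans (τ.ofFn_comp_perm ρ).symm
    · have := List.pairwise_mergeSort (le := fun a b : ℝ => decide (a ≥ b))
        (fun a b c hab hbc => decide_eq_true
          (le_trans (of_decide_eq_true hbc) (of_decide_eq_true hab)))
        (fun a b => by
          simp only [Bool.or_eq_true, decide_eq_true_eq]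
          exact (le_total b a).imp id id)
        (List.ofFn ρ)
      exact this.imp (fun h => of_decide_eq_true h)
    · rw [List.pairwise_ofFn]
      exact fun a b hab => hganti hab.le
  set T : Finset (Fin n) := Finset.univ.filter (fun i : Fin n => (i : ℕ) < l) with hT
  have hTsum : topSum ρ l = ∑ j ∈ T, g j := by
    rw [topSum, hL, List.sum_take_ofFn]
  have hTcard : T.card = l := by
    have hset : T = Finset.univ.map (Fin.castLEEmb hln) := by
      ext i
      simp only [hT, Finset.mem_filter, Finset.mem_univ, true_and, Finset.mem_map,
        Fin.castLEEmb, Function.Embedding.coeFn_mk]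
      constructor
      · intro hi
        exact ⟨⟨(i : ℕ), hi⟩, by ext; simp⟩
      · rintro ⟨k, -, rfl⟩
        exact k.2
    simp [hset]
  constructor
  · -- membership: maximum is attained
    set s : Finset (Fin n) := T.map τ.toEmbedding with hs
    set y' : Fin n → ℝ := fun i => if i ∈ s then y i + d i else y i with hy'
    refine ⟨y', ⟨?_, ?_⟩, ?_⟩
    · intro i
      by_cases hi : i ∈ s
      · simp only [hy', hi, if_pos]
        constructor
        · linarith [(hdIcc i).1]
        · linarith [(hdIcc i).2]
      · simp only [hy', hi, if_neg, not_false_iff]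
        constructor
        · linarith [hl i]
        · linarith [hu i]
    · have hsub : Finset.univ.filter (fun i => y' i ≠ y i) ⊆ s := by
        intro i hi
        simp only [Finset.mem_filter] at hi
        by_contra hns
        exact hi.2 (by simp [hy', hns])
      calc (Finset.univ.filter (fun i => y' i ≠ y i)).card ≤ s.card :=
            Finset.card_le_card hsub
        _ = T.card := by simp [hs]
        _ = l := hTcard
    · -- the value equals z·y + topSum
      simp only
      have hsum : dotR z y' = dotR z y + ∑ i ∈ s, z i * d i := by
        rw [dotR, dotR]
        have : ∀ i, z i * y' i = z i * y i + (if i ∈ s then z i * d i else 0) := by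
          intro i
          by_cases hi : i ∈ s <;> simp [hy', hi] <;> ring
        rw [Finset.sum_congr rfl (fun i _ => this i), Finset.sum_add_distrib,
          Finset.sum_ite_mem, Finset.univ_inter]
      rw [hsum]
      congr 1
      calc ∑ i ∈ s, z i * d i = ∑ i ∈ s, ρ i :=
            Finset.sum_congr rfl (fun i _ => hzd i)
        _ = ∑ j ∈ T, ρ (τ j) := by rw [hs, Finset.sum_map]; rfl
        _ = ∑ j ∈ T, g j := rfl
        _ = topSum ρ l := hTsum.symm
  · -- upper bound
    rintro v ⟨y', ⟨hIcc, hcard⟩, rfl⟩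
    simp only
    have key : ∑ i, z i * (y' i - y i) ≤ topSum ρ l := by
      set t : Finset (Fin n) := Finset.univ.filter (fun i => y' i ≠ y i) with ht
      have h1 : ∑ i, z i * (y' i - y i) = ∑ i ∈ t, z i * (y' i - y i) := by
        refine (Finset.sum_filter_of_ne ?_).symm
        intro i _ hne
        intro heq
        exact hne (by simp [heq])
      have h2 : ∑ i ∈ t, z i * (y' i - y i) ≤ ∑ i ∈ t, ρ i := by
        refine Finset.sum_le_sum (fun i _ => ?_)
        rcases le_or_gt 0 (z i) with hz | hz
        · exact le_trans (mul_le_mul_of_nonneg_left (hIcc i).2 hz) (le_max_right _ _)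
        · exact le_trans (mul_le_mul_of_nonpos_left (hIcc i).1 hz.le) (le_max_left _ _)
      set s' : Finset (Fin n) := t.map τ.symm.toEmbedding with hs'
      have h3 : ∑ i ∈ t, ρ i = ∑ j ∈ s', g j := by
        rw [hs', Finset.sum_map]
        refine Finset.sum_congr rfl (fun i _ => ?_)
        simp [hg]
      have h4 : s'.card ≤ l := by
        rw [hs', Finset.card_map]; exact hcard
      have h5 : ∑ j ∈ s', g j ≤ ∑ j ∈ T, g j :=
        sum_le_sum_first g hganti hg0 hln s' h4
      calc ∑ i, z i * (y' i - y i) = ∑ i ∈ t, z i * (y' i - y i) := h1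
        _ ≤ ∑ i ∈ t, ρ i := h2
        _ = ∑ j ∈ s', g j := h3
        _ ≤ ∑ j ∈ T, g j := h5
        _ = topSum ρ l := hTsum.symm
    have : dotR z y' = dotR z y + ∑ i, z i * (y' i - y i) := by
      rw [dotR, dotR, ← Finset.sum_add_distrib]
      exact Finset.sum_congr rfl (fun i _ => by ring)
    rw [this]
    linarith [key]
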